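/- Fix integers n ≥ 1 and ℓ₀ with 1 ≤ ℓ₀ ≤ n, and let (p_t)_{t∈ℕ} be any sequence of reals with 1/11 ≤ p_t ≤ 10/11 for all t. For each t define step_t : ℕ → PMF ℕ by letting step_t(ℓ) be the pushforward of the binomial(ℓ, p_t) distribution under b ↦ if b ≥ 1 then b else ℓ. Let μ_0 be the point mass at ℓ₀ and μ_{t+1} = μ_t.bind(step_t). Then for every t ∈ ℕ, μ_t({1}) ≥ 1 − n·(111/121)^t. -/

import Mathlib

open scoped ENNReal

lemma nat_key1 : ∀ ℓ : ℕ, 2 ≤ ℓ → 121*ℓ*10^ℓ ≤ (100*ℓ+10)*11^ℓ := by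
  intro ℓ hℓ
  induction ℓ with
  | zero => omega
  | succ m ih =>
    rcases Nat.lt_or_ge m 2 with hm | hm
    · interval_cases m <;> norm_num
    · have ih' := ih hm
      have hpos : 0 < m := by omega
      have key : 10*(m+1)*(100*m+10) ≤ 11*m*(100*(m+1)+10) := by nlinarith
      have h : 121*(m+1)*10^(m+1) * m ≤ (100*(m+1)+10)*11^(m+1) * m := by
        calc 121*(m+1)*10^(m+1) * m = 10*(m+1) * (121*m*10^m) := by ring
          _ ≤ 10*(m+1) * ((100*m+10)*11^m) := Nat.mul_le_mul_left _ ih'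
          _ = (10*(m+1)*(100*m+10)) * 11^m := by ring
          _ ≤ (11*m*(100*(m+1)+10)) * 11^m := Nat.mul_le_mul_right _ key
          _ = (100*(m+1)+10)*11^(m+1) * m := by ring
      exact Nat.le_of_mul_le_mul_right h hpos

lemma nat_key2 : ∀ ℓ : ℕ, 2 ≤ ℓ → 121*ℓ ≤ (ℓ+10)*11^ℓ := by
  intro ℓ hℓ
  have h1 : 121 ≤ 11^ℓ := by
    calc (121:ℕ) = 11^2 := by norm_num
      _ ≤ 11^ℓ := Nat.pow_le_pow_right (by norm_num) hℓ
  calc 121*ℓ ≤ 11^ℓ * ℓ := Nat.mul_le_mul_right _ h1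
    _ ≤ (ℓ+10)*11^ℓ := by
        rw [mul_comm]; exact Nat.mul_le_mul_right _ (by omega)

lemma ep1 (ℓ : ℕ) (hℓ : 1 ≤ ℓ) :
    (ℓ:ℝ)*(1/11) + (ℓ:ℝ)*((10:ℝ)/11)^ℓ ≤ 1 + (111/121)*((ℓ:ℝ)-1) := by
  rcases eq_or_lt_of_le hℓ with h | h
  · rw [← h]; norm_num
  · have h2 : 2 ≤ ℓ := h
    have hnat := nat_key1 ℓ h2
    have hcast : (121:ℝ)*ℓ*10^ℓ ≤ (100*(ℓ:ℝ)+10)*11^ℓ := by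
      exact_mod_cast hnat
    have h11 : (0:ℝ) < 11^ℓ := by positivity
    have key : (ℓ:ℝ)*((10:ℝ)/11)^ℓ ≤ (100*(ℓ:ℝ)+10)/121 := by
      rw [div_pow, ← mul_div_assoc, div_le_div_iff₀ h11 (by norm_num : (0:ℝ) < 121)]
      nlinarith [hcast]
    linarith

lemma ep2 (ℓ : ℕ) (hℓ : 1 ≤ ℓ) :
    (ℓ:ℝ)*(10/11) + (ℓ:ℝ)*((1:ℝ)/11)^ℓ ≤ 1 + (111/121)*((ℓ:ℝ)-1) := by
  rcases eq_or_lt_of_le hℓ with h | h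
  · rw [← h]; norm_num
  · have h2 : 2 ≤ ℓ := h
    have hnat := nat_key2 ℓ h2
    have hcast : (121:ℝ)*ℓ ≤ ((ℓ:ℝ)+10)*11^ℓ := by exact_mod_cast hnat
    have h11 : (0:ℝ) < 11^ℓ := by positivity
    have key : (ℓ:ℝ)*((1:ℝ)/11)^ℓ ≤ ((ℓ:ℝ)+10)/121 := by
      rw [div_pow, one_pow, ← mul_div_assoc, div_le_div_iff₀ h11 (by norm_num : (0:ℝ) < 121)]
      nlinarith [hcast]
    linarith

lemma drift_real (ℓ : ℕ) (hℓ : 1 ≤ ℓ) {p : ℝ} (hp1 : 1/11 ≤ p) (hp2 : p ≤ 10/11) :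
    (ℓ:ℝ)*p + (ℓ:ℝ)*(1-p)^ℓ ≤ 1 + (111/121)*((ℓ:ℝ)-1) := by
  have ha : (0:ℝ) ≤ (p - 1/11)*(11/9) := by linarith
  have hb : (0:ℝ) ≤ (10/11 - p)*(11/9) := by linarith
  have hab : (p - 1/11)*(11/9) + (10/11 - p)*(11/9) = 1 := by ring
  have hconv := (convexOn_pow ℓ).2 (Set.mem_Ici.2 (by norm_num : (0:ℝ) ≤ 1/11))
    (Set.mem_Ici.2 (by norm_num : (0:ℝ) ≤ 10/11)) ha hb hab
  rw [smul_eq_mul, smul_eq_mul, smul_eq_mul, smul_eq_mul] at hconv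
  have hq : (1-p)^ℓ ≤ (p-1/11)*(11/9)*((1:ℝ)/11)^ℓ + (10/11-p)*(11/9)*((10:ℝ)/11)^ℓ := by
    have hrw : (p-1/11)*(11/9)*(1/11) + (10/11-p)*(11/9)*(10/11) = 1 - p := by ring
    rwa [hrw] at hconv
  have e1 := ep1 ℓ hℓ
  have e2 := ep2 ℓ hℓ
  have hln : (0:ℝ) ≤ (ℓ:ℝ) := Nat.cast_nonneg ℓ
  nlinarith [mul_le_mul_of_nonneg_left hq hln, mul_le_mul_of_nonneg_left e2 ha,
    mul_le_mul_of_nonneg_left e1 hb]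

lemma pmf_tsum_map {α β : Type*} (q : PMF α) (f : α → β) (g : β → ℝ≥0∞) :
    ∑' b, (q.map f) b * g b = ∑' a, q a * g (f a) := by
  classical
  simp only [PMF.map_apply]
  calc ∑' b, (∑' a, if b = f a then q a else 0) * g b
      = ∑' (b) (a), (if b = f a then q a else 0) * g b := by
        refine tsum_congr fun b => ?_
        rw [ENNReal.tsum_mul_right]
    _ = ∑' (a) (b), (if b = f a then q a else 0) * g b := ENNReal.tsum_comm
    _ = ∑' a, q a * g (f a) := by
        refine tsum_congr fun a => ?_
        rw [tsum_eq_single (f a) (fun b hb => by simp [hb])]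
        simp

lemma mean_id (x y : ℝ≥0∞) (m : ℕ) :
    ∑ b ∈ Finset.range (m+2), ((m+1).choose b : ℝ≥0∞) * x^b * y^(m+1-b) * b
      = ((m:ℝ≥0∞)+1) * x * (x+y)^m := by
  rw [Finset.sum_range_succ']
  simp only [Nat.cast_zero, mul_zero, add_zero]
  have hterm : ∀ j, ((m+1).choose (j+1) : ℝ≥0∞) * x^(j+1) * y^(m+1-(j+1)) * ((j+1:ℕ):ℝ≥0∞)
      = ((m:ℝ≥0∞)+1) * x * ((m.choose j : ℝ≥0∞) * x^j * y^(m-j)) := by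
    intro j
    have h : ((m+1).choose (j+1)) * (j+1) = (m+1) * m.choose j := by
      rw [← Nat.add_one_mul_choose_eq]
    have hc : (((m+1).choose (j+1) : ℝ≥0∞)) * ((j+1:ℕ):ℝ≥0∞) = (((m+1:ℕ)):ℝ≥0∞) * (m.choose j : ℝ≥0∞) := by
      rw [← Nat.cast_mul, ← Nat.cast_mul, h]
    have hexp : m + 1 - (j+1) = m - j := by omega
    calc ((m+1).choose (j+1) : ℝ≥0∞) * x^(j+1) * y^(m+1-(j+1)) * ((j+1:ℕ):ℝ≥0∞)
        = (((m+1).choose (j+1) : ℝ≥0∞) * ((j+1:ℕ):ℝ≥0∞)) * (x^(j+1) * y^(m-j)) := by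
          rw [hexp]; ring
      _ = ((((m+1):ℕ)):ℝ≥0∞) * ((m.choose j:ℝ≥0∞)) * (x^(j+1) * y^(m-j)) := by rw [hc]
      _ = ((m:ℝ≥0∞)+1) * x * ((m.choose j : ℝ≥0∞) * x^j * y^(m-j)) := by
          push_cast; ring
  calc ∑ k ∈ Finset.range (m+1), ((m+1).choose (k+1) : ℝ≥0∞) * x^(k+1) * y^(m+1-(k+1)) * ((k+1:ℕ):ℝ≥0∞)
      = ∑ k ∈ Finset.range (m+1), ((m:ℝ≥0∞)+1) * x * ((m.choose k : ℝ≥0∞) * x^k * y^(m-k)) :=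
        Finset.sum_congr rfl (fun j _ => hterm j)
    _ = ((m:ℝ≥0∞)+1) * x * ∑ k ∈ Finset.range (m+1), (m.choose k : ℝ≥0∞) * x^k * y^(m-k) := by
        rw [← Finset.mul_sum]
    _ = ((m:ℝ≥0∞)+1) * x * (x+y)^m := by
        rw [add_pow]
        congr 1
        exact Finset.sum_congr rfl (fun k _ => by ring)

lemma step_exp_bound (pt : ℝ) (h1 : 1/11 ≤ pt) (h2 : pt ≤ 10/11)
    (hp1 : ENNReal.ofReal pt ≤ 1) (m : ℕ) :
    ∑' x : ℕ, ((PMF.binomial pt.toNNReal (ENNReal.coe_le_one_iff.mp hp1) (m+1)).map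
        (fun b : Fin (m+1+1) => if 1 ≤ (b:ℕ) then (b:ℕ) else (m+1))) x * ((x - 1 : ℕ) : ℝ≥0∞)
    ≤ ENNReal.ofReal (111/121) * (m : ℝ≥0∞) := by
  have hpt0 : (0:ℝ) ≤ pt := by linarith
  have hqt0 : (0:ℝ) ≤ 1 - pt := by linarith
  set pE := ENNReal.ofReal pt with hpE
  set qE := 1 - pE with hqE
  have hq_oR : qE = ENNReal.ofReal (1 - pt) := by
    rw [hqE, ENNReal.ofReal_sub 1 hpt0, ENNReal.ofReal_one]
  have hpq : pE + qE = 1 := add_tsub_cancel_of_le hp1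
  set P : ℕ → ℝ≥0∞ := fun b => ((m+1).choose b : ℝ≥0∞) * pE^b * qE^(m+1-b) with hP
  -- rewrite the tsum as a finite sum over range (m+2)
  rw [pmf_tsum_map, tsum_fintype]
  have happ : ∀ b : Fin (m+2), (PMF.binomial pt.toNNReal (ENNReal.coe_le_one_iff.mp hp1) (m+1)) b = P (b:ℕ) := by
    intro b
    rw [PMF.binomial_apply, hP]
    simp only [Fin.val_last]
    push_cast
    rw [show ((pt.toNNReal : NNReal) : ℝ≥0∞) = pE from rfl]
    ring
  have hrw : (∑ b : Fin (m+2), (PMF.binomial pt.toNNReal (ENNReal.coe_le_one_iff.mp hp1) (m+1)) b *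
        (((if 1 ≤ (b:ℕ) then (b:ℕ) else (m+1)) - 1 : ℕ) : ℝ≥0∞))
      = ∑ b ∈ Finset.range (m+2), P b *
        (((if 1 ≤ b then b else (m+1)) - 1 : ℕ) : ℝ≥0∞) := by
    rw [← Fin.sum_univ_eq_sum_range (fun b => P b *
        (((if 1 ≤ b then b else (m+1)) - 1 : ℕ) : ℝ≥0∞)) (m+2)]
    exact Finset.sum_congr rfl (fun b _ => by rw [happ b])
  rw [hrw]
  have hP0 : P 0 = qE^(m+1) := by simp [hP]
  have hsplit : (∑ b ∈ Finset.range (m+2), P b *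
        (((if 1 ≤ b then b else (m+1)) - 1 : ℕ) : ℝ≥0∞))
      = (∑ b ∈ Finset.range (m+2), P b * ((b - 1 : ℕ) : ℝ≥0∞)) + qE^(m+1) * (m : ℝ≥0∞) := by
    rw [Finset.sum_range_succ' (fun b => P b *
        (((if 1 ≤ b then b else (m+1)) - 1 : ℕ) : ℝ≥0∞)) (m+1),
      Finset.sum_range_succ' (fun b => P b * ((b - 1 : ℕ) : ℝ≥0∞)) (m+1)]
    simp only [Nat.le_add_left 1, if_pos, if_neg (by omega : ¬ (1:ℕ) ≤ 0),
      Nat.add_sub_cancel, Nat.zero_sub, Nat.cast_zero, mul_zero, add_zero, hP0]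
  rw [hsplit]
  have hsum1 : ∑ b ∈ Finset.range (m+2), P b = 1 := by
    have h := add_pow pE qE (m+1)
    rw [hpq, one_pow] at h
    calc ∑ b ∈ Finset.range (m+2), P b
        = ∑ b ∈ Finset.range (m+2), pE^b * qE^(m+1-b) * ((m+1).choose b : ℝ≥0∞) :=
          Finset.sum_congr rfl (fun b _ => by simp only [hP]; ring)
      _ = 1 := h.symm
  have hI2 : (∑ b ∈ Finset.range (m+2), P b * (if 1 ≤ b then 1 else 0)) + qE^(m+1) = 1 := by
    calc (∑ b ∈ Finset.range (m+2), P b * (if 1 ≤ b then 1 else 0)) + qE^(m+1)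
        = ∑ b ∈ Finset.range (m+2), P b := by
          rw [Finset.sum_range_succ' (fun b => P b * (if 1 ≤ b then 1 else 0)) (m+1),
            Finset.sum_range_succ' P (m+1)]
          simp only [Nat.le_add_left 1, if_pos, if_neg (by omega : ¬ (1:ℕ) ≤ 0),
            mul_one, mul_zero, add_zero, hP0]
      _ = 1 := hsum1
  have hmean : ∑ b ∈ Finset.range (m+2), P b * (b : ℝ≥0∞) = ((m:ℝ≥0∞)+1) * pE := by
    have h := mean_id pE qE m
    rw [hpq, one_pow, mul_one] at h
    calc ∑ b ∈ Finset.range (m+2), P b * (b : ℝ≥0∞)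
        = ∑ b ∈ Finset.range (m+2), ((m+1).choose b : ℝ≥0∞) * pE^b * qE^(m+1-b) * b :=
          Finset.sum_congr rfl (fun b _ => by simp only [hP])
      _ = ((m:ℝ≥0∞)+1) * pE := h
  have hI1 : (∑ b ∈ Finset.range (m+2), P b * ((b - 1 : ℕ) : ℝ≥0∞))
      + (∑ b ∈ Finset.range (m+2), P b * (if 1 ≤ b then 1 else 0)) = ((m:ℝ≥0∞)+1) * pE := by
    rw [← Finset.sum_add_distrib, ← hmean]
    refine Finset.sum_congr rfl (fun b _ => ?_)
    rw [← mul_add]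
    congr 1
    match b with
    | 0 => simp
    | Nat.succ k =>
      rw [if_pos (Nat.le_add_left 1 k), Nat.succ_sub_one]
      push_cast
      ring
  -- main inequality
  have hfin : (∑ b ∈ Finset.range (m+2), P b * (if 1 ≤ b then 1 else 0)) + qE^(m+1) ≠ ⊤ := by
    rw [hI2]; exact ENNReal.one_ne_top
  rw [← ENNReal.add_le_add_iff_right hfin]
  have hL : (∑ b ∈ Finset.range (m+2), P b * ((b - 1 : ℕ) : ℝ≥0∞)) + qE^(m+1) * (m : ℝ≥0∞)
      + ((∑ b ∈ Finset.range (m+2), P b * (if 1 ≤ b then 1 else 0)) + qE^(m+1))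
      = ((m:ℝ≥0∞)+1) * pE + qE^(m+1) * ((m:ℝ≥0∞)+1) := by
    rw [← hI1]; ring
  rw [hL, hI2]
  -- convert to reals
  have hm1 : ((m:ℝ≥0∞)+1) = ENNReal.ofReal ((m:ℝ)+1) := by
    rw [ENNReal.ofReal_add (by positivity) (by norm_num), ENNReal.ofReal_natCast,
      ENNReal.ofReal_one]
  rw [hq_oR, hpE, hm1, ← ENNReal.ofReal_pow hqt0, ← ENNReal.ofReal_mul (by positivity),
    ← ENNReal.ofReal_mul (by positivity), ← ENNReal.ofReal_add (by positivity) (by positivity),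
    ← ENNReal.ofReal_natCast m, ← ENNReal.ofReal_mul (by norm_num),
    ← ENNReal.ofReal_one, ← ENNReal.ofReal_add (by positivity) (by norm_num)]
  apply ENNReal.ofReal_le_ofReal
  have hd := drift_real (m+1) (Nat.le_add_left 1 m) h1 h2
  push_cast at hd ⊢
  linarith

/-- Time-inhomogeneous Markov chain model of the `LeaderElectionExact`
protocol. At time `t` the step from state `ℓ` is the law of `(if B ≥ 1 then B else ℓ)` where
`B` is binomial with `ℓ` trials and success probability `p_t ∈ [1/11, 10/11]`. Started from a
point mass at `ℓ₀` with `1 ≤ ℓ₀ ≤ n`, the chain law `μ_t` satisfies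
`μ_t({1}) ≥ 1 - n·(111/121)^t` for every `t`. -/
theorem stmt4 (n ℓ₀ : ℕ) (hn : 1 ≤ n) (hℓ₀ : 1 ≤ ℓ₀) (hℓ₀n : ℓ₀ ≤ n)
    (p : ℕ → ℝ) (hp_lo : ∀ t, 1 / 11 ≤ p t) (hp_hi : ∀ t, p t ≤ 10 / 11)
    (hp1 : ∀ t, ENNReal.ofReal (p t) ≤ 1)
    (step : ℕ → ℕ → PMF ℕ)
    (hstep : ∀ t ℓ, step t ℓ =
      (PMF.binomial (p t).toNNReal (ENNReal.coe_le_one_iff.mp (hp1 t)) ℓ).map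
        (fun b : Fin (ℓ + 1) => if 1 ≤ (b : ℕ) then (b : ℕ) else ℓ))
    (μ : ℕ → PMF ℕ) (hμ0 : μ 0 = PMF.pure ℓ₀) (hμs : ∀ t, μ (t + 1) = (μ t).bind (step t)) :
    ∀ t : ℕ, 1 - (n : ℝ) * (111 / 121) ^ t ≤ ((μ t) 1).toReal := by
  set c : ℝ≥0∞ := ENNReal.ofReal (111/121) with hc
  -- support lemma
  have hsupp : ∀ t a, a ∈ (μ t).support → 1 ≤ a := by
    intro t
    induction t with
    | zero =>
      intro a ha
      rw [hμ0, PMF.support_pure, Set.mem_singleton_iff] at ha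
      omega
    | succ t ih =>
      intro a ha
      rw [hμs t, PMF.mem_support_bind_iff] at ha
      obtain ⟨x, hx, hax⟩ := ha
      rw [hstep t x, PMF.mem_support_map_iff] at hax
      obtain ⟨b, hb, hba⟩ := hax
      by_cases h1b : 1 ≤ (b:ℕ)
      · rw [if_pos h1b] at hba; omega
      · rw [if_neg h1b] at hba
        have := ih x hx
        omega
  -- one-step contraction of the potential
  have hΦstep : ∀ t, (∑' a, μ (t+1) a * ((a - 1 : ℕ) : ℝ≥0∞))
      ≤ c * ∑' a, μ t a * ((a - 1 : ℕ) : ℝ≥0∞) := by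
    intro t
    rw [hμs t]
    calc ∑' a, ((μ t).bind (step t)) a * ((a - 1 : ℕ) : ℝ≥0∞)
        = ∑' (a) (x), μ t x * (step t x) a * ((a - 1 : ℕ) : ℝ≥0∞) := by
          refine tsum_congr fun a => ?_
          rw [PMF.bind_apply, ENNReal.tsum_mul_right]
      _ = ∑' (x) (a), μ t x * (step t x) a * ((a - 1 : ℕ) : ℝ≥0∞) := ENNReal.tsum_comm
      _ = ∑' x, μ t x * ∑' a, (step t x) a * ((a - 1 : ℕ) : ℝ≥0∞) := by
          refine tsum_congr fun x => ?_
          rw [← ENNReal.tsum_mul_left]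
          exact tsum_congr fun a => by ring
      _ ≤ ∑' x, μ t x * (c * ((x - 1 : ℕ) : ℝ≥0∞)) := by
          refine ENNReal.tsum_le_tsum fun x => ?_
          by_cases hx : μ t x = 0
          · simp [hx]
          · have hx1 : 1 ≤ x := hsupp t x hx
            obtain ⟨m, rfl⟩ : ∃ m, x = m + 1 := ⟨x - 1, by omega⟩
            refine mul_le_mul_right ?_ _
            rw [hstep t (m+1)]
            have h := step_exp_bound (p t) (hp_lo t) (hp_hi t) (hp1 t) m
            simpa using h
      _ = c * ∑' x, μ t x * ((x - 1 : ℕ) : ℝ≥0∞) := by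
          rw [← ENNReal.tsum_mul_left]
          exact tsum_congr fun x => by ring
  -- potential bound by induction
  have hΦ : ∀ t, (∑' a, μ t a * ((a - 1 : ℕ) : ℝ≥0∞)) ≤ c^t * (n : ℝ≥0∞) := by
    intro t
    induction t with
    | zero =>
      rw [hμ0, pow_zero, one_mul]
      have : (∑' a, PMF.pure ℓ₀ a * ((a - 1 : ℕ) : ℝ≥0∞)) = ((ℓ₀ - 1 : ℕ) : ℝ≥0∞) := by
        rw [tsum_eq_single ℓ₀ (fun a ha => by simp [PMF.pure_apply, ha])]
        simp [PMF.pure_apply]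
      rw [this]
      exact_mod_cast Nat.cast_le.2 (by omega : ℓ₀ - 1 ≤ n)
    | succ t ih =>
      calc (∑' a, μ (t+1) a * ((a - 1 : ℕ) : ℝ≥0∞))
          ≤ c * ∑' a, μ t a * ((a - 1 : ℕ) : ℝ≥0∞) := hΦstep t
        _ ≤ c * (c^t * (n : ℝ≥0∞)) := mul_le_mul_right ih _
        _ = c^(t+1) * (n : ℝ≥0∞) := by ring
  -- main bound in ℝ≥0∞
  have hmain : ∀ t, (1:ℝ≥0∞) ≤ μ t 1 + c^t * (n : ℝ≥0∞) := by
    intro t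
    have h1 : (1:ℝ≥0∞) = ∑' a, μ t a := (μ t).tsum_coe.symm
    have hdec : (∑' a, μ t a) ≤ μ t 1 + ∑' a, μ t a * ((a - 1 : ℕ) : ℝ≥0∞) := by
      rw [ENNReal.tsum_eq_add_tsum_ite 1]
      refine add_le_add_right (ENNReal.tsum_le_tsum fun a => ?_) _
      by_cases ha1 : a = 1
      · simp [ha1]
      · rw [if_neg ha1]
        by_cases hx : μ t a = 0
        · simp [hx]
        · have ha2 : 2 ≤ a := by have := hsupp t a hx; omega
          refine le_mul_of_one_le_right (zero_le (a := μ t a)) ?_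
          exact_mod_cast Nat.one_le_cast.2 (by omega : 1 ≤ a - 1)
    calc (1:ℝ≥0∞) = ∑' a, μ t a := h1
      _ ≤ μ t 1 + ∑' a, μ t a * ((a - 1 : ℕ) : ℝ≥0∞) := hdec
      _ ≤ μ t 1 + c^t * (n : ℝ≥0∞) := add_le_add_right (hΦ t) _
  -- conversion to reals
  intro t
  have hcr : c^t * (n : ℝ≥0∞) = ENNReal.ofReal ((111/121 : ℝ)^t * n) := by
    rw [ENNReal.ofReal_mul (by positivity), ENNReal.ofReal_pow (by norm_num),
      ENNReal.ofReal_natCast]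
  have h := hmain t
  rw [hcr] at h
  have hfin : μ t 1 ≠ ⊤ := ne_top_of_le_ne_top ENNReal.one_ne_top ((μ t).coe_le_one 1)
  have hfin2 : μ t 1 + ENNReal.ofReal ((111/121 : ℝ)^t * n) ≠ ⊤ :=
    ENNReal.add_ne_top.2 ⟨hfin, ENNReal.ofReal_ne_top⟩
  have h' := ENNReal.toReal_mono hfin2 h
  rw [ENNReal.toReal_one, ENNReal.toReal_add hfin ENNReal.ofReal_ne_top,
    ENNReal.toReal_ofReal (by positivity)] at h'
  nlinarith [h']
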